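/- (Correctness of reduction R2.) Let G be a finite simple graph with cardinality function c, let v be a leaf of G (a vertex of degree 1) and let u be its unique neighbour. Define a new cardinality function c' on G - v that agrees with c everywhere except c'_0(u) = c0(u) * (c1(v) + c0(v) * c0(uv)) and c'_1(u) = c1(u) * c0(v). Then c(G) computed with c equals c(G - v) computed with c'. -/

import Mathlib

open Finset

noncomputable section
open scoped Classical

variable {V : Type*}

/-- `S` is an independent set of the simple graph `G`. -/
def Indep (G : SimpleGraph V) (S : Finset V) : Prop :=
  ∀ u ∈ S, ∀ w ∈ S, ¬ G.Adj u w

/-- Independent sets of the induced subgraph `G[W]`. -/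
def indepOn [Fintype V] (G : SimpleGraph V) (W : Finset V) : Finset (Finset V) :=
  univ.filter fun S => S ⊆ W ∧ Indep G S

/-- Weight `c_{G[W]}(S)` of an independent set `S` of `G[W]` with respect to the
cardinality function given by vertex weights `c1, c0` and edge weights `ce`. -/
def wt [Fintype V] (G : SimpleGraph V) (c1 c0 : V → ℚ) (ce : Sym2 V → ℚ)
    (W S : Finset V) : ℚ :=
  (∏ v ∈ S, c1 v) * (∏ v ∈ W \ S, c0 v) *
    ∏ e ∈ G.edgeFinset.filter (fun e => (∀ x ∈ e, x ∈ W) ∧ ∀ x ∈ e, x ∉ S), ce e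

/-- `c(G[W])`: the weighted sum over all independent sets of `G[W]`. -/
def tot [Fintype V] (G : SimpleGraph V) (c1 c0 : V → ℚ) (ce : Sym2 V → ℚ)
    (W : Finset V) : ℚ :=
  ∑ S ∈ indepOn G W, wt G c1 c0 ce W S

/-- `c(G[W], v^η)`: the weighted sum over independent sets `S` of `G[W]` with
`v ∈ S` iff `η = 1`. -/
def totC [Fintype V] (G : SimpleGraph V) (c1 c0 : V → ℚ) (ce : Sym2 V → ℚ)
    (W : Finset V) (v : V) (η : Bool) : ℚ :=
  ∑ S ∈ (indepOn G W).filter (fun S => v ∈ S ↔ η = true), wt G c1 c0 ce W S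

/-- `c(G[W], u^ζ, v^η)`. -/
def totC2 [Fintype V] (G : SimpleGraph V) (c1 c0 : V → ℚ) (ce : Sym2 V → ℚ)
    (W : Finset V) (u v : V) (ζ η : Bool) : ℚ :=
  ∑ S ∈ (indepOn G W).filter (fun S => (u ∈ S ↔ ζ = true) ∧ (v ∈ S ↔ η = true)),
    wt G c1 c0 ce W S

/-- Any edge containing the leaf `v` is the edge `s(u,v)`. -/
lemma leaf_edge_eq (G : SimpleGraph V) (v u : V)
    (hleaf : ∀ w, G.Adj v w → w = u) :
    ∀ e ∈ G.edgeSet, v ∈ e → e = s(u, v) := by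
  intro e
  induction e using Sym2.ind with
  | _ a b =>
    intro he hv
    rw [SimpleGraph.mem_edgeSet] at he
    rcases Sym2.mem_iff.mp hv with rfl | rfl
    · have hb := hleaf b he
      subst hb
      exact Sym2.eq_swap
    · have ha := hleaf a he.symm
      subst ha
      rfl

lemma indep_insert_leaf (G : SimpleGraph V) (v u : V)
    (hleaf : ∀ w, G.Adj v w → w = u) (S : Finset V)
    (hI : Indep G S) (hu : u ∉ S) : Indep G (insert v S) := by
  intro a ha b hb hab
  simp only [mem_insert] at ha hb
  rcases ha with rfl | ha
  · rcases hb with rfl | hb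
    · exact G.loopless.irrefl _ hab
    · have hb' := hleaf b hab
      subst hb'
      exact hu hb
  · rcases hb with rfl | hb
    · have ha' := hleaf a hab.symm
      subst ha'
      exact hu ha
    · exact hI a ha b hb hab

lemma mem_indepOn [Fintype V] {G : SimpleGraph V} {W S : Finset V} :
    S ∈ indepOn G W ↔ S ⊆ W ∧ Indep G S := by
  simp [indepOn]

/-- Pointwise identity, case `u ∈ S`. -/
lemma wtA [Fintype V] (G : SimpleGraph V) (c1 c0 : V → ℚ) (ce : Sym2 V → ℚ)
    (v u : V) (huv : G.Adj v u) (hleaf : ∀ w, G.Adj v w → w = u)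
    (S : Finset V) (hv : v ∉ S) (hu : u ∈ S) :
    wt G c1 c0 ce univ S =
      wt G (Function.update c1 u (c1 u * c0 v))
        (Function.update c0 u (c0 u * (c1 v + c0 v * ce s(u, v)))) ce
        ({v} : Finset V)ᶜ S := by
  have hvu : v ≠ u := huv.ne
  have hsetc : (({v} : Finset V)ᶜ \ S) = (univ \ S).erase v := by
    ext x
    simp only [mem_sdiff, mem_compl, mem_singleton, mem_erase, mem_univ, true_and]
  have e1 : ∏ x ∈ S, Function.update c1 u (c1 u * c0 v) x = c0 v * ∏ x ∈ S, c1 x := by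
    rw [Finset.prod_update_of_mem hu, ← Finset.mul_prod_erase S c1 hu,
      Finset.sdiff_singleton_eq_erase]
    ring
  have e2 : ∏ x ∈ (univ \ S), c0 x = c0 v * ∏ x ∈ (({v} : Finset V)ᶜ \ S), c0 x := by
    rw [hsetc, ← Finset.mul_prod_erase (univ \ S) c0 (by simp [hv] : v ∈ univ \ S)]
  have e3 : ∏ x ∈ (({v} : Finset V)ᶜ \ S),
      Function.update c0 u (c0 u * (c1 v + c0 v * ce s(u, v))) x
      = ∏ x ∈ (({v} : Finset V)ᶜ \ S), c0 x := by
    refine Finset.prod_update_of_notMem (fun h => ?_) _ _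
    exact (Finset.mem_sdiff.mp h).2 hu
  have e4 : G.edgeFinset.filter (fun e => (∀ x ∈ e, x ∈ (univ : Finset V)) ∧ ∀ x ∈ e, x ∉ S)
      = G.edgeFinset.filter
        (fun e => (∀ x ∈ e, x ∈ ({v} : Finset V)ᶜ) ∧ ∀ x ∈ e, x ∉ S) := by
    refine Finset.filter_congr ?_
    intro e he
    simp only [mem_univ, imp_true_iff, true_and, mem_compl, mem_singleton]
    constructor
    · intro h
      refine ⟨fun x hx hxv => ?_, h⟩
      subst hxv
      have heq := leaf_edge_eq G x u hleaf e (SimpleGraph.mem_edgeFinset.mp he) hx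
      have humem : u ∈ e := by rw [heq]; exact Sym2.mem_mk_left u x
      exact h u humem hu
    · exact fun h => h.2
  unfold wt
  rw [e1, e3, e2, ← e4]
  ring

/-- Pointwise identity, case `u ∉ S`. -/
lemma wtB [Fintype V] (G : SimpleGraph V) (c1 c0 : V → ℚ) (ce : Sym2 V → ℚ)
    (v u : V) (huv : G.Adj v u) (hleaf : ∀ w, G.Adj v w → w = u)
    (S : Finset V) (hv : v ∉ S) (hu : u ∉ S) :
    wt G c1 c0 ce univ S + wt G c1 c0 ce univ (insert v S) =
      wt G (Function.update c1 u (c1 u * c0 v))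
        (Function.update c0 u (c0 u * (c1 v + c0 v * ce s(u, v)))) ce
        ({v} : Finset V)ᶜ S := by
  have hvu : v ≠ u := huv.ne
  have hsetc : (({v} : Finset V)ᶜ \ S) = (univ \ S).erase v := by
    ext x
    simp only [mem_sdiff, mem_compl, mem_singleton, mem_erase, mem_univ, true_and]
  have hE : s(u, v) ∈ G.edgeFinset := by
    rw [SimpleGraph.mem_edgeFinset, SimpleGraph.mem_edgeSet]
    exact huv.symm
  -- vertex products
  have e1 : ∏ x ∈ S, Function.update c1 u (c1 u * c0 v) x = ∏ x ∈ S, c1 x :=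
    Finset.prod_update_of_notMem hu _ _
  have e2 : ∏ x ∈ (univ \ S), c0 x = c0 v * ∏ x ∈ (({v} : Finset V)ᶜ \ S), c0 x := by
    rw [hsetc, ← Finset.mul_prod_erase (univ \ S) c0 (by simp [hv] : v ∈ univ \ S)]
  have huW : u ∈ (({v} : Finset V)ᶜ \ S) := by
    simp only [mem_sdiff, mem_compl, mem_singleton]
    exact ⟨fun h => hvu h.symm, hu⟩
  have e3 : ∏ x ∈ (({v} : Finset V)ᶜ \ S),
      Function.update c0 u (c0 u * (c1 v + c0 v * ce s(u, v))) x
      = (c1 v + c0 v * ce s(u, v)) * ∏ x ∈ (({v} : Finset V)ᶜ \ S), c0 x := by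
    rw [Finset.prod_update_of_mem huW, Finset.sdiff_singleton_eq_erase,
      ← Finset.mul_prod_erase _ c0 huW]
    ring
  have e4 : ∏ x ∈ insert v S, c1 x = c1 v * ∏ x ∈ S, c1 x := Finset.prod_insert hv
  have e5 : (univ : Finset V) \ insert v S = (({v} : Finset V)ᶜ \ S) := by
    ext x
    simp only [mem_sdiff, mem_univ, true_and, mem_insert, mem_compl, mem_singleton]
    tauto
  -- edge products
  have hedge1 : G.edgeFinset.filter
        (fun e => (∀ x ∈ e, x ∈ (univ : Finset V)) ∧ ∀ x ∈ e, x ∉ S)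
      = insert s(u, v) (G.edgeFinset.filter
        (fun e => (∀ x ∈ e, x ∈ ({v} : Finset V)ᶜ) ∧ ∀ x ∈ e, x ∉ S)) := by
    ext e
    simp only [mem_insert, mem_filter, mem_univ, imp_true_iff, true_and, mem_compl,
      mem_singleton]
    constructor
    · rintro ⟨he, hd⟩
      by_cases hve : v ∈ e
      · exact Or.inl (leaf_edge_eq G v u hleaf e (SimpleGraph.mem_edgeFinset.mp he) hve)
      · exact Or.inr ⟨he, fun x hx hxv => hve (hxv ▸ hx), hd⟩
    · rintro (rfl | ⟨he, _, hd⟩)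
      · refine ⟨hE, fun x hx => ?_⟩
        rcases Sym2.mem_iff.mp hx with rfl | rfl
        · exact hu
        · exact hv
      · exact ⟨he, hd⟩
  have hnot : s(u, v) ∉ G.edgeFinset.filter
      (fun e => (∀ x ∈ e, x ∈ ({v} : Finset V)ᶜ) ∧ ∀ x ∈ e, x ∉ S) := by
    intro hmem
    rw [mem_filter] at hmem
    have := hmem.2.1 v (Sym2.mem_mk_right u v)
    simp at this
  have hedge2 : G.edgeFinset.filter
        (fun e => (∀ x ∈ e, x ∈ (univ : Finset V)) ∧ ∀ x ∈ e, x ∉ insert v S)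
      = G.edgeFinset.filter
        (fun e => (∀ x ∈ e, x ∈ ({v} : Finset V)ᶜ) ∧ ∀ x ∈ e, x ∉ S) := by
    refine Finset.filter_congr ?_
    intro e he
    simp only [mem_univ, imp_true_iff, true_and, mem_insert, mem_compl, mem_singleton,
      not_or]
    constructor
    · intro h
      exact ⟨fun x hx => (h x hx).1, fun x hx => (h x hx).2⟩
    · intro h x hx
      exact ⟨h.1 x hx, h.2 x hx⟩
  unfold wt
  rw [e1, e3, e2, e4, e5, hedge1, hedge2, Finset.prod_insert hnot]
  ring

/-- Correctness of reduction R2: if `v` is a leaf of `G` with unique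
neighbour `u`, and `c'` agrees with `c` except that
`c'_0(u) = c0(u) * (c1(v) + c0(v) * c0(uv))` and `c'_1(u) = c1(u) * c0(v)`, then
`c(G)` with respect to `c` equals `c(G - v)` with respect to `c'`. -/
theorem tot_leaf [Fintype V] (G : SimpleGraph V)
    (c1 c0 : V → ℚ) (ce : Sym2 V → ℚ) (v u : V)
    (huv : G.Adj v u) (hleaf : ∀ w, G.Adj v w → w = u) :
    tot G c1 c0 ce univ =
      tot G (Function.update c1 u (c1 u * c0 v))
        (Function.update c0 u (c0 u * (c1 v + c0 v * ce s(u, v)))) ce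
        ({v} : Finset V)ᶜ := by
  classical
  have hvu : v ≠ u := huv.ne
  set c1' := Function.update c1 u (c1 u * c0 v) with hc1'
  set c0' := Function.update c0 u (c0 u * (c1 v + c0 v * ce s(u, v))) with hc0'
  -- split LHS by v ∈ T
  have hsplit : tot G c1 c0 ce univ
      = ∑ T ∈ (indepOn G univ).filter (fun T => v ∈ T), wt G c1 c0 ce univ T
        + ∑ T ∈ (indepOn G univ).filter (fun T => ¬ v ∈ T), wt G c1 c0 ce univ T :=
    (Finset.sum_filter_add_sum_filter_not _ _ _).symm
  -- the v ∉ T part is exactly indepOn over {v}ᶜ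
  have hset1 : (indepOn G univ).filter (fun T => ¬ v ∈ T) = indepOn G ({v} : Finset V)ᶜ := by
    ext S
    rw [mem_filter, mem_indepOn, mem_indepOn]
    constructor
    · rintro ⟨⟨-, hI⟩, hv⟩
      refine ⟨fun x hx => ?_, hI⟩
      simp only [mem_compl, mem_singleton]
      intro hxv
      exact hv (hxv ▸ hx)
    · rintro ⟨hsub, hI⟩
      refine ⟨⟨subset_univ _, hI⟩, fun hvS => ?_⟩
      have := hsub hvS
      simp at this
  -- the v ∈ T part: biject onto subsets of {v}ᶜ avoiding u
  have hbij : ∑ T ∈ (indepOn G univ).filter (fun T => v ∈ T), wt G c1 c0 ce univ T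
      = ∑ S ∈ (indepOn G ({v} : Finset V)ᶜ).filter (fun S => ¬ u ∈ S),
          wt G c1 c0 ce univ (insert v S) := by
    refine Finset.sum_bij' (fun T _ => T.erase v) (fun S _ => insert v S) ?_ ?_ ?_ ?_ ?_
    · intro T hT
      rw [mem_filter, mem_indepOn] at hT
      obtain ⟨⟨-, hI⟩, hvT⟩ := hT
      rw [mem_filter, mem_indepOn]
      refine ⟨⟨fun x hx => ?_, fun a ha b hb => hI a (mem_of_mem_erase ha) b (mem_of_mem_erase hb)⟩, fun huT => ?_⟩
      · simp only [mem_erase] at hx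
        simp only [mem_compl, mem_singleton]
        exact hx.1
      · exact hI v hvT u (mem_of_mem_erase huT) huv
    · intro S hS
      rw [mem_filter, mem_indepOn] at hS
      obtain ⟨⟨hsub, hI⟩, huS⟩ := hS
      have hvS : v ∉ S := fun h => by simpa using hsub h
      rw [mem_filter, mem_indepOn]
      exact ⟨⟨subset_univ _, indep_insert_leaf G v u hleaf S hI huS⟩, mem_insert_self v S⟩
    · intro T hT
      simp only [mem_filter] at hT
      exact Finset.insert_erase hT.2
    · intro S hS
      simp only [mem_filter, indepOn, mem_univ, true_and] at hS
      have hvS : v ∉ S := fun h => by simpa using hS.1.1 h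
      exact Finset.erase_insert hvS
    · intro T hT
      simp only [mem_filter] at hT
      rw [Finset.insert_erase hT.2]
  -- split RHS by u ∈ S
  have hsplit2 : tot G c1' c0' ce ({v} : Finset V)ᶜ
      = ∑ S ∈ (indepOn G ({v} : Finset V)ᶜ).filter (fun S => u ∈ S),
          wt G c1' c0' ce ({v} : Finset V)ᶜ S
        + ∑ S ∈ (indepOn G ({v} : Finset V)ᶜ).filter (fun S => ¬ u ∈ S),
          wt G c1' c0' ce ({v} : Finset V)ᶜ S :=
    (Finset.sum_filter_add_sum_filter_not _ _ _).symm
  have hsplit3 : ∑ S ∈ indepOn G ({v} : Finset V)ᶜ, wt G c1 c0 ce univ S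
      = ∑ S ∈ (indepOn G ({v} : Finset V)ᶜ).filter (fun S => u ∈ S),
          wt G c1 c0 ce univ S
        + ∑ S ∈ (indepOn G ({v} : Finset V)ᶜ).filter (fun S => ¬ u ∈ S),
          wt G c1 c0 ce univ S :=
    (Finset.sum_filter_add_sum_filter_not _ _ _).symm
  rw [hsplit, hset1, hsplit2, hbij, hsplit3]
  have hvmem : ∀ S ∈ indepOn G ({v} : Finset V)ᶜ, v ∉ S := by
    intro S hS
    rw [mem_indepOn] at hS
    exact fun h => by simpa using hS.1 h
  have hA : ∑ S ∈ (indepOn G ({v} : Finset V)ᶜ).filter (fun S => u ∈ S),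
        wt G c1 c0 ce univ S
      = ∑ S ∈ (indepOn G ({v} : Finset V)ᶜ).filter (fun S => u ∈ S),
        wt G c1' c0' ce ({v} : Finset V)ᶜ S := by
    refine Finset.sum_congr rfl ?_
    intro S hS
    simp only [mem_filter] at hS
    exact wtA G c1 c0 ce v u huv hleaf S (hvmem S hS.1) hS.2
  have hB : ∑ S ∈ (indepOn G ({v} : Finset V)ᶜ).filter (fun S => ¬ u ∈ S),
        wt G c1 c0 ce univ S
      + ∑ S ∈ (indepOn G ({v} : Finset V)ᶜ).filter (fun S => ¬ u ∈ S),
        wt G c1 c0 ce univ (insert v S)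
      = ∑ S ∈ (indepOn G ({v} : Finset V)ᶜ).filter (fun S => ¬ u ∈ S),
        wt G c1' c0' ce ({v} : Finset V)ᶜ S := by
    rw [← Finset.sum_add_distrib]
    refine Finset.sum_congr rfl ?_
    intro S hS
    simp only [mem_filter] at hS
    exact wtB G c1 c0 ce v u huv hleaf S (hvmem S hS.1) hS.2
  rw [← hA, ← hB]
  ring
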